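/- Let q be a prime power with q ≥ 3 and let f be a permutation polynomial of F_q. Then there exist α, β, γ, δ ∈ F_q, with γ and δ not both zero, such that f(c) = (αc + β)/(γc + δ) (in particular γc + δ ≠ 0) holds for at least q − Crk(f) distinct elements c ∈ F_q. -/

import Mathlib

open Polynomial Finset

/-- The Carlitz composition `P_n` over a field with `q` elements, built from
the constants `c 0, c 1, …, c (n+1)`:
`P_n(x) = (⋯((c_0 x + c_1)^{q-2} + c_2)^{q-2} ⋯ + c_n)^{q-2} + c_{n+1}`. -/
def carlitzAux {F : Type*} [Field F] (q : ℕ) (c : ℕ → F) : ℕ → F → F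
  | 0 => fun x => c 0 * x + c 1
  | n + 1 => fun x => (carlitzAux q c n x) ^ (q - 2) + c (n + 2)

/-- `f` agrees (as a map) with a Carlitz composition `P_n` with `n` inversions,
where `c 0 ≠ 0` and `c i ≠ 0` for `2 ≤ i ≤ n`. -/
def IsCarlitzForm {F : Type*} [Field F] [Fintype F] (f : F → F) (n : ℕ) : Prop :=
  ∃ c : ℕ → F, c 0 ≠ 0 ∧ (∀ i, 2 ≤ i → i ≤ n → c i ≠ 0) ∧
    ∀ x, f x = carlitzAux (Fintype.card F) c n x

/-- The Carlitz rank of a map `f`: the smallest `n` such that `f` agrees with a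
Carlitz composition `P_n`. -/
noncomputable def carlitzRank {F : Type*} [Field F] [Fintype F] (f : F → F) : ℕ :=
  sInf {n | IsCarlitzForm f n}

/-- `f` is the `r`-th order cyclotomic mapping of index `ℓ` with respect to the
primitive element `ξ` and coefficients `a 0, …, a (ℓ-1)`: it maps `0` to `0` and
`x` to `a i * x ^ r` for `x` in the cyclotomic coset `C_i = ξ^i C_0`, where
`C_0` is the set of nonzero `ℓ`-th powers. -/
def IsCycMap {F : Type*} [Field F] (ℓ r : ℕ) (ξ : F) (a : ℕ → F) (f : F → F) : Prop :=
  f 0 = 0 ∧ (∀ i < ℓ, a i ≠ 0) ∧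
    ∀ i < ℓ, ∀ y : F, y ≠ 0 → f (ξ ^ i * y ^ ℓ) = a i * (ξ ^ i * y ^ ℓ) ^ r

/-- The index `Ind(f)` of a map `f` with `f 0 = 0`: the smallest divisor `ℓ` of
`q - 1` such that `f` is an `r`-th order cyclotomic mapping of index `ℓ` for some
positive `r`, some primitive element `ξ` and some nonzero coefficients. -/
noncomputable def cycIndex {F : Type*} [Field F] [Fintype F] (f : F → F) : ℕ :=
  sInf {ℓ | ℓ ∣ Fintype.card F - 1 ∧ ∃ r, 1 ≤ r ∧ ∃ ξ : F,
    orderOf ξ = Fintype.card F - 1 ∧ ∃ a : ℕ → F, IsCycMap ℓ r ξ a f}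

/-- The linearity `L(f) = max_{a ≠ 0} |{c : f c = a c}|`. -/
def linearity {F : Type*} [Field F] [Fintype F] [DecidableEq F] (f : F → F) : ℕ :=
  (Finset.univ.erase (0 : F)).sup
    (fun a => (Finset.univ.filter (fun c => f c = a * c)).card)

/-- The invertibility `I(f) = max_{c ≠ 0} |{x ≠ 0 : f x = c / x}|`. -/
def invertibility {F : Type*} [Field F] [Fintype F] [DecidableEq F] (f : F → F) : ℕ :=
  (Finset.univ.erase (0 : F)).sup
    (fun c => ((Finset.univ.erase (0 : F)).filter (fun x => f x = c / x)).card)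

section CarlitzAuxLemmas

variable {F : Type*} [Field F] [Fintype F]

lemma qpow_inv (hq : 3 ≤ Fintype.card F) {y : F} (hy : y ≠ 0) :
    y ^ (Fintype.card F - 2) = y⁻¹ := by
  have h1 : y ^ (Fintype.card F - 1) = 1 := FiniteField.pow_card_sub_one_eq_one y hy
  have h2 : Fintype.card F - 1 = (Fintype.card F - 2) + 1 := by omega
  rw [h2, pow_succ] at h1
  field_simp
  linear_combination h1

lemma qpow_qpow (hq : 3 ≤ Fintype.card F) (y : F) :
    (y ^ (Fintype.card F - 2)) ^ (Fintype.card F - 2) = y := by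
  rcases eq_or_ne y 0 with rfl | hy
  · rw [zero_pow (by omega : Fintype.card F - 2 ≠ 0),
      zero_pow (by omega : Fintype.card F - 2 ≠ 0)]
  · rw [qpow_inv hq hy, qpow_inv hq (inv_ne_zero hy), inv_inv]

/-- `f` agrees with some Carlitz composition. -/
def Carl (f : F → F) : Prop := ∃ n, IsCarlitzForm f n

lemma carl_ext {f g : F → F} (h : ∀ x, f x = g x) (hg : Carl g) : Carl f := by
  obtain ⟨n, c, h0, hi, he⟩ := hg
  exact ⟨n, c, h0, hi, fun x => (h x).trans (he x)⟩

lemma carlitzAux_congr (q : ℕ) {c c' : ℕ → F} :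
    ∀ n, (∀ i ≤ n + 1, c i = c' i) → ∀ x, carlitzAux q c n x = carlitzAux q c' n x := by
  intro n
  induction n with
  | zero => intro h x; simp [carlitzAux, h 0 (by omega), h 1 (by omega)]
  | succ m ih =>
      intro h x
      simp only [carlitzAux]
      rw [ih (fun i hi => h i (by omega)) x, h (m + 2) (by omega)]

lemma carlitzAux_add_const (q : ℕ) (c : ℕ → F) (n : ℕ) (d : F) (x : F) :
    carlitzAux q (Function.update c (n + 1) (c (n + 1) + d)) n x = carlitzAux q c n x + d := by
  cases n with
  | zero =>
      simp [carlitzAux, Function.update_apply]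
      ring
  | succ m =>
      simp only [carlitzAux]
      rw [carlitzAux_congr q m (fun i hi => Function.update_of_ne (by omega) _ c) x,
        Function.update_self]
      ring

lemma carl_inv (hq : 3 ≤ Fintype.card F) {g : F → F} (hg : Carl g) (d : F) :
    Carl (fun x => g x ^ (Fintype.card F - 2) + d) := by
  obtain ⟨n, c, h0, hi, he⟩ := hg
  cases n with
  | zero =>
      refine ⟨1, fun i => if i = 2 then d else c i, by simp [h0], by omega, fun x => ?_⟩
      simp only [carlitzAux, he x]
      norm_num
  | succ m =>
      rcases eq_or_ne (c (m + 2)) 0 with hc | hc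
      · refine ⟨m, Function.update c (m + 1) (c (m + 1) + d), ?_, ?_, fun x => ?_⟩
        · rwa [Function.update_of_ne (by omega)]
        · intro i h2 him
          rw [Function.update_of_ne (by omega)]
          exact hi i h2 (by omega)
        · show g x ^ (Fintype.card F - 2) + d = _
          rw [carlitzAux_add_const]
          have hx : g x = (carlitzAux (Fintype.card F) c m x) ^ (Fintype.card F - 2) := by
            rw [he x]; simp [carlitzAux, hc]
          rw [hx, qpow_qpow hq]
      · refine ⟨m + 2, Function.update c (m + 3) d, ?_, ?_, fun x => ?_⟩
        · rwa [Function.update_of_ne (by omega)]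
        · intro i h2 him
          rw [Function.update_of_ne (by omega)]
          rcases eq_or_ne i (m + 2) with rfl | hne
          · exact hc
          · exact hi i h2 (by omega)
        · have hcongr : carlitzAux (Fintype.card F) (Function.update c (m + 3) d) (m + 1) x
              = carlitzAux (Fintype.card F) c (m + 1) x :=
            carlitzAux_congr _ _ (fun i hi => Function.update_of_ne (by omega) _ c) x
          show g x ^ (Fintype.card F - 2) + d = _
          rw [he x]
          show _ = carlitzAux (Fintype.card F) (Function.update c (m + 3) d) (m + 1) x
              ^ (Fintype.card F - 2) + Function.update c (m + 3) d (m + 3)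
          rw [hcongr, Function.update_self]

lemma carl_affine_aux (hq : 3 ≤ Fintype.card F) :
    ∀ (n : ℕ) (c : ℕ → F), c 0 ≠ 0 → ∀ a b : F, a ≠ 0 →
      Carl (fun x => a * carlitzAux (Fintype.card F) c n x + b) := by
  intro n
  induction n with
  | zero =>
      intro c h0 a b ha
      refine ⟨0, fun i => if i = 0 then a * c 0 else a * c 1 + b,
        by simpa using mul_ne_zero ha h0, by omega, fun x => ?_⟩
      simp only [carlitzAux]
      norm_num
      ring
  | succ m ih =>
      intro c h0 a b ha
      have hea : (a ^ (Fintype.card F - 2)) ^ (Fintype.card F - 2) = a := qpow_qpow hq a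
      have hen : a ^ (Fintype.card F - 2) ≠ 0 := pow_ne_zero _ ha
      have h1 : Carl (fun x => a ^ (Fintype.card F - 2) * carlitzAux (Fintype.card F) c m x + 0) :=
        ih c h0 _ 0 hen
      have h2 := carl_inv hq h1 (a * c (m + 2) + b)
      refine carl_ext (fun x => ?_) h2
      simp only [carlitzAux, add_zero]
      rw [mul_pow, hea]
      ring

lemma carl_affine (hq : 3 ≤ Fintype.card F) {g : F → F} (hg : Carl g) {a : F} (b : F)
    (ha : a ≠ 0) : Carl (fun x => a * g x + b) := by
  obtain ⟨n, c, h0, hi, he⟩ := hg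
  refine carl_ext (fun x => ?_) (carl_affine_aux hq n c h0 a b ha)
  rw [he x]

lemma carl_comp (hq : 3 ≤ Fintype.card F) {h g : F → F} (hh : Carl h) (hg : Carl g) :
    Carl (fun x => h (g x)) := by
  obtain ⟨n, c, h0, hi, he⟩ := hh
  have key : ∀ (n : ℕ) (c : ℕ → F), c 0 ≠ 0 →
      Carl (fun x => carlitzAux (Fintype.card F) c n (g x)) := by
    intro n
    induction n with
    | zero => intro c h0; exact carl_affine hq hg (c 1) h0
    | succ m ih => intro c h0; exact carl_inv hq (ih c h0) (c (m + 2))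
  exact carl_ext (fun x => he (g x)) (key n c h0)

lemma carl_id : Carl (id : F → F) :=
  ⟨0, fun i => if i = 0 then 1 else 0, by norm_num, by omega, fun x => by simp [carlitzAux]⟩

end CarlitzAuxLemmas

section Swap

variable {F : Type*} [Field F] [Fintype F] [DecidableEq F]

lemma carl_swap01 (hq : 3 ≤ Fintype.card F) :
    Carl (fun x : F => if x = 0 then 1 else if x = 1 then 0 else x) := by
  have hpne : Fintype.card F - 2 ≠ 0 := by omega
  have hm1 : (-1 : F) ≠ 0 := neg_ne_zero.mpr one_ne_zero
  have g1 : Carl (fun x : F => 1 * x + (-1)) :=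
    ⟨0, fun i => if i = 0 then 1 else -1, by norm_num, by omega, fun x => by simp [carlitzAux]⟩
  have g2 := carl_inv hq g1 (1 : F)
  have g3 := carl_inv hq g2 (-1 : F)
  have g4 := carl_inv hq g3 (0 : F)
  have g5 := carl_affine hq g4 (0 : F) hm1
  refine carl_ext (fun x => ?_) g5
  simp only [add_zero]
  rcases eq_or_ne x 0 with rfl | hx0
  · rw [if_pos rfl, show (1 : F) * 0 + -1 = -1 by ring, qpow_inv hq hm1, inv_neg, inv_one,
      show (-1 : F) + 1 = 0 by ring, zero_pow hpne, zero_add, qpow_inv hq hm1, inv_neg, inv_one]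
    ring
  · rcases eq_or_ne x 1 with rfl | hx1
    · rw [if_neg one_ne_zero, if_pos rfl, show (1 : F) * 1 + -1 = 0 by ring, zero_pow hpne,
        zero_add, one_pow, show (1 : F) + -1 = 0 by ring, zero_pow hpne]
      ring
    · rw [if_neg hx0, if_neg hx1]
      have h1 : (1 : F) * x + -1 ≠ 0 := by
        intro h; apply hx1; linear_combination h
      rw [qpow_inv hq h1]
      have e2 : ((1 : F) * x + -1)⁻¹ + 1 = x * ((1 : F) * x + -1)⁻¹ := by
        linear_combination -(mul_inv_cancel₀ h1)
      have h2 : ((1 : F) * x + -1)⁻¹ + 1 ≠ 0 := by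
        rw [e2]; exact mul_ne_zero hx0 (inv_ne_zero h1)
      rw [qpow_inv hq h2, e2, mul_inv, inv_inv]
      have e3 : x⁻¹ * ((1 : F) * x + -1) + -1 = -x⁻¹ := by
        linear_combination mul_inv_cancel₀ hx0
      rw [e3]
      have h3 : -x⁻¹ ≠ 0 := neg_ne_zero.mpr (inv_ne_zero hx0)
      rw [qpow_inv hq h3, inv_neg, inv_inv]
      ring

lemma carl_swap (hq : 3 ≤ Fintype.card F) (a b : F) :
    Carl (⇑(Equiv.swap a b) : F → F) := by
  rcases eq_or_ne a b with rfl | hab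
  · refine carl_ext (fun x => ?_) (carl_id (F := F))
    simp
  · set τ : F → F := fun x => if x = 0 then 1 else if x = 1 then 0 else x with hτ
    have hba : b - a ≠ 0 := sub_ne_zero.mpr (Ne.symm hab)
    have hinv : Carl (fun x : F => (b - a)⁻¹ * x + (-(a) * (b - a)⁻¹)) :=
      ⟨0, fun i => if i = 0 then (b - a)⁻¹ else -(a) * (b - a)⁻¹,
        by simpa using inv_ne_zero hba, by omega, fun x => by simp [carlitzAux]⟩
    have hτc : Carl τ := carl_swap01 hq
    have hcomp : Carl (fun x : F => τ ((b - a)⁻¹ * x + (-(a) * (b - a)⁻¹))) :=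
      carl_comp hq hτc hinv
    have hfin := carl_affine hq hcomp a hba
    refine carl_ext (fun x => ?_) hfin
    have key : (b - a)⁻¹ * x + -a * (b - a)⁻¹ = (x - a) * (b - a)⁻¹ := by ring
    rw [Equiv.swap_apply_def]
    rcases eq_or_ne x a with h | hxa
    · have hv : τ (0 : F) = 1 := by simp [hτ]
      rw [if_pos h, key, h, sub_self, zero_mul, hv]
      ring
    · rcases eq_or_ne x b with h | hxb
      · have hv : τ (1 : F) = 0 := by norm_num [hτ]
        rw [if_neg hxa, if_pos h, key, h, mul_inv_cancel₀ hba, hv]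
        ring
      · have k1 : (x - a) * (b - a)⁻¹ ≠ 0 :=
          mul_ne_zero (sub_ne_zero.mpr hxa) (inv_ne_zero hba)
        have k2 : (x - a) * (b - a)⁻¹ ≠ 1 := by
          intro h
          apply hxb
          field_simp at h
          linear_combination h
        have hv : τ ((x - a) * (b - a)⁻¹) = (x - a) * (b - a)⁻¹ := by
          simp only [hτ]
          rw [if_neg k1, if_neg k2]
        rw [if_neg hxa, if_neg hxb, key, hv]
        field_simp
        ring

lemma carl_perm (hq : 3 ≤ Fintype.card F) (σ : Equiv.Perm F) : Carl (⇑σ : F → F) := by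
  refine Equiv.Perm.swap_induction_on σ (carl_ext (fun x => rfl) (carl_id (F := F)))
    (fun f x y hxy ih => ?_)
  have h : Carl (fun z : F => Equiv.swap x y (f z)) := carl_comp hq (carl_swap hq x y) ih
  exact carl_ext (fun z => rfl) h

end Swap

section Mobius

variable {F : Type*} [Field F] [Fintype F] [DecidableEq F]

lemma carlitz_mobius (hq : 3 ≤ Fintype.card F) :
    ∀ (n : ℕ) (c : ℕ → F), c 0 ≠ 0 →
      ∃ α β γ δ : F, α * δ - β * γ ≠ 0 ∧ ∃ T : Finset F, T.card ≤ n ∧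
        ∀ x ∉ T, γ * x + δ ≠ 0 ∧
          carlitzAux (Fintype.card F) c n x = (α * x + β) / (γ * x + δ) := by
  intro n
  induction n with
  | zero =>
      intro c h0
      refine ⟨c 0, c 1, 0, 1, by simpa using h0, ∅, le_refl _, fun x _ => ?_⟩
      constructor
      · norm_num
      · simp [carlitzAux]
  | succ m ih =>
      intro c h0
      obtain ⟨α, β, γ, δ, hdet, T, hT, hfor⟩ := ih c h0
      refine ⟨γ + c (m + 2) * α, δ + c (m + 2) * β, α, β, by
        intro h; apply hdet; linear_combination -h, insert (-β / α) T, ?_, fun x hx => ?_⟩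
      · exact (Finset.card_insert_le _ _).trans (by omega)
      · have hxT : x ∉ T := fun h => hx (Finset.mem_insert_of_mem h)
        have hxp : x ≠ -β / α := fun h => hx (h ▸ Finset.mem_insert_self _ _)
        obtain ⟨hden, hval⟩ := hfor x hxT
        have hnum : α * x + β ≠ 0 := by
          rcases eq_or_ne α 0 with rfl | hα
          · intro h
            apply hdet
            rw [zero_mul, zero_add] at h
            rw [h]
            ring
          · intro h
            apply hxp
            field_simp
            linear_combination h
        refine ⟨hnum, ?_⟩
        show (carlitzAux (Fintype.card F) c m x) ^ (Fintype.card F - 2) + c (m + 2) = _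
        have h5 : (α * x + β) / (γ * x + δ) ≠ 0 := div_ne_zero hnum hden
        rw [hval, qpow_inv hq h5, inv_div]
        rw [div_add' _ _ _ hnum]
        ring

end Mobius

/-- For a permutation polynomial `f` of `F_q` (`q ≥ 3`), there are
`α, β, γ, δ ∈ F_q`, with `γ, δ` not both zero, such that
`f(c) = (αc+β)/(γc+δ)` (with `γc+δ ≠ 0`) for at least `q − Crk(f)` elements `c`. -/
theorem stmt2 {F : Type*} [Field F] [Fintype F] [DecidableEq F]
    (hq : 3 ≤ Fintype.card F) (f : Polynomial F)
    (hperm : Function.Bijective fun x => f.eval x) :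
    ∃ α β γ δ : F, (γ ≠ 0 ∨ δ ≠ 0) ∧
      (Fintype.card F : ℤ) - (carlitzRank (fun x => f.eval x) : ℤ) ≤
        ((Finset.univ.filter
          (fun c : F => γ * c + δ ≠ 0 ∧ f.eval c = (α * c + β) / (γ * c + δ))).card : ℤ) := by
  set g : F → F := fun x => f.eval x with hg
  have hcarl : Carl g := carl_ext (fun x => rfl) (carl_perm hq (Equiv.ofBijective g hperm))
  have hne : {n | IsCarlitzForm g n}.Nonempty := hcarl
  have hmem : IsCarlitzForm g (carlitzRank g) := Nat.sInf_mem hne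
  obtain ⟨cc, h0, hi, he⟩ := hmem
  obtain ⟨α, β, γ, δ, hdet, T, hT, hfor⟩ := carlitz_mobius hq (carlitzRank g) cc h0
  refine ⟨α, β, γ, δ, ?_, ?_⟩
  · by_contra h
    push_neg at h
    apply hdet
    rw [h.1, h.2]
    ring
  · have hsub : Finset.univ \ T ⊆ Finset.univ.filter
        (fun x : F => γ * x + δ ≠ 0 ∧ f.eval x = (α * x + β) / (γ * x + δ)) := by
      intro x hx
      rw [Finset.mem_sdiff] at hx
      obtain ⟨hden, hval⟩ := hfor x hx.2
      refine Finset.mem_filter.mpr ⟨Finset.mem_univ _, hden, ?_⟩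
      rw [show f.eval x = g x from rfl, he x, hval]
    have h1 := Finset.card_le_card hsub
    have h2 : (Finset.univ \ T).card = Fintype.card F - T.card := by
      rw [Finset.card_sdiff_of_subset (Finset.subset_univ T), Finset.card_univ]
    have h3 : T.card ≤ Fintype.card F :=
      le_trans (Finset.card_le_card (Finset.subset_univ T)) (le_of_eq Finset.card_univ)
    rw [h2] at h1
    omega
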